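/- Let ω be a primitive cube root of unity, 0<r<1, λ>0, and y_j = rω^j for j=1,2,3. With k_ij = (1 - y_i conj(y_j))^{-λ}, the angular invariant satisfies arg(k_12 k_23 k_31) = 3λ·arg(1 - r²ω) (taken modulo 2π). Consequently there exist r ∈ (0,1) and λ > 0 such that cos(arg(k_12 k_23 k_31)) < 0. -/

import Mathlib

open Complex

/-- A primitive cube root of unity. -/
noncomputable def cubeRoot : ℂ := Complex.exp (2 * Real.pi * Complex.I / 3)

/-- The kernel entries `k_ij = (1 - y_i conj(y_j))^{-λ}` for `y_j = r·ω^j`. -/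
noncomputable def rotKernel (r lam : ℝ) (i j : ℕ) : ℂ :=
  (1 - ((r : ℂ) * cubeRoot ^ i) * (starRingEnd ℂ) ((r : ℂ) * cubeRoot ^ j)) ^ (-(lam : ℂ))

lemma arg_exp_exists (W : ℂ) : ∃ n : ℤ, Complex.arg (Complex.exp W) = W.im + 2 * Real.pi * n := by
  have h : Complex.exp W = Complex.exp ((W.re : ℂ) + Complex.arg (Complex.exp W) * Complex.I) := by
    conv_lhs => rw [← Complex.norm_mul_exp_arg_mul_I (Complex.exp W)]
    rw [Complex.norm_exp, Complex.ofReal_exp, ← Complex.exp_add]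
  obtain ⟨n, hn⟩ := Complex.exp_eq_exp_iff_exists_int.mp h
  refine ⟨-n, ?_⟩
  have := congrArg Complex.im hn
  simp at this
  push_cast
  linarith

lemma cubeRoot_arith : cubeRoot ^ 3 = 1 ∧ (starRingEnd ℂ) cubeRoot = cubeRoot ^ 2 ∧
    cubeRoot.im = Real.sin (2 * Real.pi / 3) := by
  have hform : (2 * (Real.pi : ℂ) * Complex.I / 3) = ((2 * Real.pi / 3 : ℝ) : ℂ) * Complex.I := by
    push_cast; ring
  have h3 : cubeRoot ^ 3 = 1 := by
    rw [cubeRoot, ← Complex.exp_nat_mul]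
    norm_num
    rw [show (3 : ℂ) * (2 * (Real.pi : ℂ) * Complex.I / 3) = 2 * Real.pi * Complex.I by ring]
    exact Complex.exp_two_pi_mul_I
  have hne : cubeRoot ≠ 0 := by
    intro h
    simpa [h] using h3
  have habs : Complex.normSq cubeRoot = 1 := by
    rw [Complex.normSq_eq_norm_sq, cubeRoot, hform, Complex.norm_exp_ofReal_mul_I]
    norm_num
  have hcc : (starRingEnd ℂ) cubeRoot * cubeRoot = 1 := by
    rw [mul_comm, Complex.mul_conj, habs]; norm_num
  have hconj : (starRingEnd ℂ) cubeRoot = cubeRoot ^ 2 := by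
    have : cubeRoot ^ 2 * cubeRoot = 1 := by rw [← pow_succ]; exact h3
    exact mul_right_cancel₀ hne (hcc.trans this.symm)
  refine ⟨h3, hconj, ?_⟩
  rw [cubeRoot, hform, Complex.exp_ofReal_mul_I_im]

lemma argu_neg (r : ℝ) (hr : 0 < r) : Complex.arg (1 - (r : ℂ) ^ 2 * cubeRoot) < 0 := by
  obtain ⟨h3, hconj, him⟩ := cubeRoot_arith
  rw [Complex.arg_neg_iff]
  have hsin : 0 < Real.sin (2 * Real.pi / 3) :=
    Real.sin_pos_of_pos_of_lt_pi (by positivity) (by linarith [Real.pi_pos])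
  have : (1 - (r : ℂ) ^ 2 * cubeRoot).im = -(r ^ 2 * Real.sin (2 * Real.pi / 3)) := by
    simp [Complex.sub_im, Complex.mul_im, him, ← Complex.ofReal_pow]
  rw [this]
  nlinarith [mul_pos (pow_pos hr 2) hsin]

lemma key (r lam : ℝ) (hr : 0 < r) (hl : 0 < lam) :
    ∃ m : ℤ, Complex.arg (rotKernel r lam 1 2 * rotKernel r lam 2 3 * rotKernel r lam 3 1) =
      3 * lam * Complex.arg (1 - (r : ℂ) ^ 2 * cubeRoot) + 2 * Real.pi * m := by
  obtain ⟨h3, hconj, him⟩ := cubeRoot_arith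
  set c := cubeRoot with hc
  set u : ℂ := 1 - (r : ℂ) ^ 2 * c with hu
  set z : ℂ := 1 - (r : ℂ) ^ 2 * c ^ 2 with hzdef
  have hsin : 0 < Real.sin (2 * Real.pi / 3) :=
    Real.sin_pos_of_pos_of_lt_pi (by positivity) (by linarith [Real.pi_pos])
  have hu_im : u.im = -(r ^ 2 * Real.sin (2 * Real.pi / 3)) := by
    simp [hu, Complex.sub_im, Complex.mul_im, him, ← Complex.ofReal_pow]
  have hu_im_neg : u.im < 0 := by
    rw [hu_im]; nlinarith [mul_pos (pow_pos hr 2) hsin]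
  have hu_ne : u ≠ 0 := by
    intro h; rw [h] at hu_im_neg; simp at hu_im_neg
  have hz_eq : z = (starRingEnd ℂ) u := by
    simp [hu, hzdef, map_sub, map_mul, map_pow, Complex.conj_ofReal, hconj]
  have hz_ne : z ≠ 0 := by
    rw [hz_eq]; simpa using hu_ne
  have e12 : rotKernel r lam 1 2 = z ^ (-(lam : ℂ)) := by
    rw [rotKernel]
    congr 1
    rw [map_mul, map_pow, hconj, Complex.conj_ofReal, hzdef]
    linear_combination (-(r : ℂ) ^ 2 * c ^ 2) * h3
  have e23 : rotKernel r lam 2 3 = z ^ (-(lam : ℂ)) := by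
    rw [rotKernel]
    congr 1
    rw [map_mul, map_pow, hconj, Complex.conj_ofReal, hzdef]
    linear_combination (-(r : ℂ) ^ 2 * c ^ 2 * (c ^ 3 + 1)) * h3
  have e31 : rotKernel r lam 3 1 = z ^ (-(lam : ℂ)) := by
    rw [rotKernel]
    congr 1
    rw [map_mul, map_pow, hconj, Complex.conj_ofReal, hzdef]
    linear_combination (-(r : ℂ) ^ 2 * c ^ 2) * h3
  have harg : Complex.arg z = -Complex.arg u := by
    rw [hz_eq, Complex.arg_conj, if_neg]
    intro h
    rw [Complex.arg_eq_pi_iff] at h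
    exact absurd h.2 (ne_of_lt hu_im_neg)
  rw [e12, e23, e31, Complex.cpow_def_of_ne_zero hz_ne, ← Complex.exp_add, ← Complex.exp_add]
  obtain ⟨n, hn⟩ := arg_exp_exists
      (Complex.log z * (-(lam : ℂ)) + Complex.log z * (-(lam : ℂ)) + Complex.log z * (-(lam : ℂ)))
  refine ⟨n, ?_⟩
  rw [hn]
  have hW : (Complex.log z * (-(lam : ℂ)) + Complex.log z * (-(lam : ℂ)) +
      Complex.log z * (-(lam : ℂ))).im = 3 * lam * Complex.arg u := by
    simp [Complex.add_im, Complex.mul_im, Complex.log_im, harg]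
    ring
  rw [hW]

theorem rotKernel_angular_invariant :
    (∀ r lam : ℝ, 0 < r → r < 1 → 0 < lam →
      ∃ m : ℤ, Complex.arg (rotKernel r lam 1 2 * rotKernel r lam 2 3 * rotKernel r lam 3 1) =
        3 * lam * Complex.arg (1 - (r : ℂ) ^ 2 * cubeRoot) + 2 * Real.pi * m) ∧
      ∃ r lam : ℝ, 0 < r ∧ r < 1 ∧ 0 < lam ∧
        Real.cos (Complex.arg
          (rotKernel r lam 1 2 * rotKernel r lam 2 3 * rotKernel r lam 3 1)) < 0 := by
  constructor
  · intro r lam hr _ hl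
    exact key r lam hr hl
  · set a := Complex.arg (1 - ((1/2 : ℝ) : ℂ) ^ 2 * cubeRoot) with hadef
    have ha : a < 0 := argu_neg (1/2) (by norm_num)
    have ha' : a ≠ 0 := ne_of_lt ha
    set lam := Real.pi / (3 * (-a)) with hlamdef
    have hlam : 0 < lam := div_pos Real.pi_pos (by linarith)
    obtain ⟨m, hm⟩ := key (1/2) lam (by norm_num) hlam
    refine ⟨1/2, lam, by norm_num, by norm_num, hlam, ?_⟩
    rw [hm, ← hadef]
    have h1 : 3 * lam * a + 2 * Real.pi * m = -Real.pi + m * (2 * Real.pi) := by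
      rw [hlamdef]
      field_simp
    rw [h1, Real.cos_add_int_mul_two_pi, Real.cos_neg, Real.cos_pi]
    norm_num
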